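/- Let D be a triangulated category and (E_0, ..., E_r) a strong exceptional collection in D. If the right orthogonal complement ⟨E_0, ..., E_r⟩^⊥ = 0 (i.e., any object F with Hom(E_i[k], F) = 0 for all i and all shifts k must be zero), then the smallest full triangulated subcategory containing E_0, ..., E_r and closed under direct summands is all of D; that is, the collection is full. -/

import Mathlib

/-!
STATEMENT 0. If `(E_0, …, E_r)` is a strong exceptional collection in a (ℂ-linear,
Hom-finite, bounded) triangulated category `D` whose right orthogonal vanishes,
then the collection is full: the smallest triangulated subcategory containing the
`E_i` and closed under direct summands is all of `D`.
-/

open CategoryTheory Category Limits Pretriangulated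

namespace Stmt0

variable {C : Type*} [Category C] [Preadditive C] [HasZeroObject C]
  [HasShift C ℤ] [∀ n : ℤ, (shiftFunctor C n).Additive] [Pretriangulated C]

/-- `genBy S` is the smallest class of objects containing `S` and closed under
isomorphisms, shifts, cones of morphisms (distinguished triangles) and direct
summands, i.e. the objects of the triangulated subcategory `⟨S⟩`. -/
inductive genBy (S : Set C) : C → Prop
  | of {X : C} : X ∈ S → genBy S X
  | isoClosed {X Y : C} : (X ≅ Y) → genBy S X → genBy S Y
  | shift {X : C} (n : ℤ) : genBy S X → genBy S (X⟦n⟧)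
  | ext {T : Triangle C} : (T ∈ distTriang C) → genBy S T.obj₁ → genBy S T.obj₂ →
      genBy S T.obj₃
  | summand {X Y : C} (i : X ⟶ Y) (p : Y ⟶ X) : i ≫ p = 𝟙 X → genBy S Y → genBy S X

/-- If the first and third objects of a distinguished triangle are generated,
so is the second. -/
lemma genBy_ext₂ {S : Set C} {T : Triangle C} (hT : T ∈ distTriang C)
    (h1 : genBy S T.obj₁) (h3 : genBy S T.obj₃) : genBy S T.obj₂ := by
  have h : genBy S ((T.obj₂)⟦(1 : ℤ)⟧) :=
    genBy.ext (rot_of_distTriang _ (rot_of_distTriang _ hT)) h3 (genBy.shift 1 h1)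
  exact genBy.isoClosed ((shiftFunctorCompIsoId C (1 : ℤ) (-1) (by ring)).app T.obj₂)
    (genBy.shift (-1) h)

/-- Unshift a morphism with shifted source. -/
noncomputable def unshift (a : ℤ) {A B : C} (h : A⟦a⟧ ⟶ B) : A ⟶ B⟦-a⟧ :=
  ((shiftFunctorCompIsoId C a (-a) (add_neg_cancel a)).app A).inv ≫
    (shiftFunctor C (-a)).map h

lemma unshift_eq_zero_iff (a : ℤ) {A B : C} (h : A⟦a⟧ ⟶ B) :
    unshift a h = 0 ↔ h = 0 := by
  rw [unshift, Preadditive.IsIso.comp_left_eq_zero, Functor.map_eq_zero_iff]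

lemma unshift_comp (a : ℤ) {A B D : C} (h : A⟦a⟧ ⟶ B) (u : B ⟶ D) :
    unshift a (h ≫ u) = unshift a h ≫ (shiftFunctor C (-a)).map u := by
  rw [unshift, unshift, Functor.map_comp, assoc]

/-- Merging two shifts. -/
noncomputable def mergeIso (p q : ℤ) (X : C) : (X⟦p⟧)⟦q⟧ ≅ X⟦p + q⟧ :=
  ((shiftFunctorAdd C p q).app X).symm

section Collection

variable {r : ℕ} (E : Fin (r + 1) → C)

/-- Vanishing of `Hom(E j, E i⟦m⟧)` for `i < j`, or `i = j` and `m ≠ 0`. -/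
lemma homEE (hHom : ∀ i j : Fin (r + 1), j < i → ∀ f : E i ⟶ E j, f = 0)
    (hExt : ∀ i j : Fin (r + 1), ∀ m : ℤ, m ≠ 0 → ∀ f : E i ⟶ (E j)⟦m⟧, f = 0)
    {j i : Fin (r + 1)} (m : ℤ) (cond : i < j ∨ m ≠ 0) (g : E j ⟶ (E i)⟦m⟧) :
    g = 0 := by
  by_cases hm : m = 0
  · subst hm
    have hij : i < j := cond.resolve_right (by simp)
    have h0 : g ≫ ((shiftFunctorZero C ℤ).hom.app (E i)) = 0 := hHom j i hij _
    rwa [Preadditive.IsIso.comp_right_eq_zero] at h0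
  · exact hExt j i m hm g

/-- Vanishing of morphisms between shifted members of the collection. -/
lemma shiftedHomEE (hHom : ∀ i j : Fin (r + 1), j < i → ∀ f : E i ⟶ E j, f = 0)
    (hExt : ∀ i j : Fin (r + 1), ∀ m : ℤ, m ≠ 0 → ∀ f : E i ⟶ (E j)⟦m⟧, f = 0)
    {j i : Fin (r + 1)} (a b c : ℤ) (cond : i < j ∨ b + c + -a ≠ 0)
    (h : (E j)⟦a⟧ ⟶ ((E i)⟦b⟧)⟦c⟧) : h = 0 := by
  rw [← unshift_eq_zero_iff a]
  have e : ((((E i)⟦b⟧)⟦c⟧)⟦-a⟧ : C) ≅ (E i)⟦b + c + -a⟧ :=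
    (shiftFunctor C (-a)).mapIso (mergeIso b c (E i)) ≪≫ mergeIso (b + c) (-a) (E i)
  have h0 : unshift a h ≫ e.hom = 0 := homEE E hHom hExt _ cond _
  rwa [Preadditive.IsIso.comp_right_eq_zero] at h0

/-- Cancellation against a nonzero map out of a shifted exceptional object. -/
lemma endoCancel [Linear ℂ C]
    (hEnd : ∀ i, ∀ f : E i ⟶ E i, ∃ c : ℂ, f = c • 𝟙 (E i))
    (i : Fin (r + 1)) (a : ℤ) {Y : C} (u : (E i)⟦a⟧ ⟶ Y) (hu : u ≠ 0)
    (h : (E i)⟦a⟧ ⟶ (E i)⟦a⟧) (hc : h ≫ u = 0) : h = 0 := by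
  set e := (shiftFunctorCompIsoId C a (-a) (add_neg_cancel a)).app (E i) with he
  set ψ : E i ⟶ E i := unshift a h ≫ e.hom with hψ
  set u' : E i ⟶ Y⟦-a⟧ := e.inv ≫ (shiftFunctor C (-a)).map u with hu'
  have hu'0 : u' ≠ 0 := by
    rw [hu', Ne, Preadditive.IsIso.comp_left_eq_zero, Functor.map_eq_zero_iff]
    exact hu
  have hcomp : ψ ≫ u' = 0 := by
    have h1 : ψ ≫ u' = unshift a h ≫ (shiftFunctor C (-a)).map u := by
      rw [hψ, hu', assoc, Iso.hom_inv_id_assoc]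
    rw [h1, ← unshift_comp, hc, (unshift_eq_zero_iff a 0).mpr rfl]
  obtain ⟨c, hcψ⟩ := hEnd i ψ
  have hcu : c • u' = 0 := by
    rw [← hcomp, hcψ, Linear.smul_comp, id_comp]
  have hc0 : c = 0 := by
    rcases smul_eq_zero.mp hcu with h0 | h0
    · exact h0
    · exact absurd h0 hu'0
  have hψ0 : unshift a h ≫ e.hom = 0 := by
    rw [← hψ, hcψ, hc0, zero_smul]
  rw [Preadditive.IsIso.comp_right_eq_zero] at hψ0
  exact (unshift_eq_zero_iff a h).mp hψ0

end Collection

/-- A strong exceptional collection whose right orthogonal complement vanishes is full. -/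
theorem strong_exceptional_with_trivial_right_orthogonal_is_full
    [Linear ℂ C] {r : ℕ} (E : Fin (r + 1) → C)
    -- `Hom(E_k, E_k) = ℂ`
    (hEnd : ∀ i, ∀ f : E i ⟶ E i, ∃ c : ℂ, f = c • 𝟙 (E i))
    -- `Hom(E_k, E_j) = 0` for `k > j`
    (hHom : ∀ i j : Fin (r + 1), j < i → ∀ f : E i ⟶ E j, f = 0)
    -- `Hom^m(E_k, E_j) = 0` for all `k, j` and all `m ≠ 0` (strongness)
    (hExt : ∀ i j : Fin (r + 1), ∀ m : ℤ, m ≠ 0 → ∀ f : E i ⟶ (E j)⟦m⟧, f = 0)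
    -- the ambient category is Hom-finite and bounded (as is `D^b(X)`)
    (hFin : ∀ A B : C, FiniteDimensional ℂ (A ⟶ B))
    (hBdd : ∀ A B : C, ∃ N : ℕ, ∀ m : ℤ, (N : ℤ) ≤ |m| → ∀ f : A ⟶ B⟦m⟧, f = 0)
    -- `⟨E_0, …, E_r⟩^⊥ = 0`
    (hPerp : ∀ F : C, (∀ i : Fin (r + 1), ∀ m : ℤ, ∀ f : (E i)⟦m⟧ ⟶ F, f = 0) →
      IsZero F) :
    ∀ X : C, genBy (Set.range E) X := by
  classical
  -- Key step: kill one nonzero morphism from a shifted `E i` by passing to a cone.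
  have key : ∀ (i : Fin (r + 1)) (X : C) (m₀ : ℤ) (f : (E i)⟦m₀⟧ ⟶ X), f ≠ 0 →
      ∃ (Z : C) (g : X ⟶ Z) (h' : Z ⟶ ((E i)⟦m₀⟧)⟦(1 : ℤ)⟧),
        (Triangle.mk f g h' ∈ distTriang C) ∧
        (∀ k : ℤ, ∀ w : (E i)⟦k⟧ ⟶ Z, ∃ v : (E i)⟦k⟧ ⟶ X, w = v ≫ g) := by
    intro i X m₀ f hf
    obtain ⟨Z, g, h', hT⟩ := distinguished_cocone_triangle f
    refine ⟨Z, g, h', hT, ?_⟩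
    intro k w
    have hw3 : w ≫ h' = 0 := by
      by_cases hk : k = m₀ + 1
      · subst hk
        set q : (E i)⟦m₀ + 1⟧ ⟶ ((E i)⟦m₀⟧)⟦(1 : ℤ)⟧ := w ≫ h' with hq
        have hq1 : q ≫ (shiftFunctor C (1 : ℤ)).map f = 0 := by
          have h31 := comp_distTriang_mor_zero₃₁ _ hT
          rw [hq, assoc]
          change w ≫ (Triangle.mk f g h').mor₃ ≫ (Triangle.mk f g h').mor₁⟦(1 : ℤ)⟧' = 0
          exact (congrArg (fun t => w ≫ t) h31).trans comp_zero
        set md := mergeIso m₀ 1 (E i) with hmd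
        have hf1 : (shiftFunctor C (1 : ℤ)).map f ≠ 0 := by
          rw [Ne, Functor.map_eq_zero_iff]
          exact hf
        have hu : md.inv ≫ (shiftFunctor C (1 : ℤ)).map f ≠ 0 := by
          rw [Ne, Preadditive.IsIso.comp_left_eq_zero]
          exact hf1
        have hend : (q ≫ md.hom) ≫ (md.inv ≫ (shiftFunctor C (1 : ℤ)).map f) = 0 := by
          rw [assoc, Iso.hom_inv_id_assoc]
          exact hq1
        have h0 := endoCancel E hEnd i (m₀ + 1) _ hu (q ≫ md.hom) hend
        rwa [Preadditive.IsIso.comp_right_eq_zero] at h0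
      · exact shiftedHomEE E hHom hExt k m₀ 1 (Or.inr (by omega)) (w ≫ h')
    obtain ⟨v, hv⟩ := Triangle.coyoneda_exact₃ _ hT w hw3
    exact ⟨v, hv⟩
  -- Peeling off one exceptional object, by induction on the total Hom dimension.
  have peel : ∀ (n : ℕ) (i : Fin (r + 1)) (X : C),
      (∃ s : Finset ℤ, (∀ k, k ∉ s → ∀ w : (E i)⟦k⟧ ⟶ X, w = 0) ∧
        (∑ k ∈ s, Module.finrank ℂ ((E i)⟦k⟧ ⟶ X)) ≤ n) →
      (∀ j : Fin (r + 1), i < j → ∀ (m : ℤ) (w : (E j)⟦m⟧ ⟶ X), w = 0) →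
      (∀ Y : C, (∀ j : Fin (r + 1), i ≤ j → ∀ (m : ℤ) (w : (E j)⟦m⟧ ⟶ Y), w = 0) →
        genBy (Set.range E) Y) →
      genBy (Set.range E) X := by
    intro n
    induction n with
    | zero =>
      intro i X hs hperp next
      obtain ⟨s, hvan, hsum⟩ := hs
      have hz : ∀ (m : ℤ) (w : (E i)⟦m⟧ ⟶ X), w = 0 := by
        intro m w
        by_contra hw
        have hm : m ∈ s := by
          by_contra hm
          exact hw (hvan m hm w)
        haveI := hFin ((E i)⟦m⟧) X
        have hpos : 0 < Module.finrank ℂ ((E i)⟦m⟧ ⟶ X) :=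
          Module.finrank_pos_iff.mpr ⟨⟨w, 0, hw⟩⟩
        have hle : Module.finrank ℂ ((E i)⟦m⟧ ⟶ X) ≤
            ∑ k ∈ s, Module.finrank ℂ ((E i)⟦k⟧ ⟶ X) :=
          Finset.single_le_sum (f := fun k => Module.finrank ℂ ((E i)⟦k⟧ ⟶ X))
            (fun _ _ => Nat.zero_le _) hm
        omega
      apply next X
      intro j hj m w
      rcases eq_or_lt_of_le hj with h | h
      · cases h
        exact hz m w
      · exact hperp j h m w
    | succ n ih =>
      intro i X hs hperp next
      obtain ⟨s, hvan, hsum⟩ := hs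
      by_cases hz : ∀ (m : ℤ) (w : (E i)⟦m⟧ ⟶ X), w = 0
      · apply next X
        intro j hj m w
        rcases eq_or_lt_of_le hj with h | h
        · cases h
          exact hz m w
        · exact hperp j h m w
      · push_neg at hz
        obtain ⟨m₀, f, hf⟩ := hz
        obtain ⟨Z, g, h', hT, hsurj⟩ := key i X m₀ f hf
        have hm₀s : m₀ ∈ s := by
          by_contra hm
          exact hf (hvan m₀ hm f)
        have hdim : ∀ k : ℤ, Module.finrank ℂ ((E i)⟦k⟧ ⟶ Z) ≤
            Module.finrank ℂ ((E i)⟦k⟧ ⟶ X) := by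
          intro k
          haveI := hFin ((E i)⟦k⟧) X
          haveI := hFin ((E i)⟦k⟧) Z
          set α := Linear.rightComp ℂ ((E i)⟦k⟧) g with hα
          have hαs : Function.Surjective α := by
            intro w
            obtain ⟨v, hv⟩ := hsurj k w
            exact ⟨v, hv.symm⟩
          have h1 := LinearMap.finrank_range_add_finrank_ker α
          rw [LinearMap.range_eq_top.mpr hαs, finrank_top] at h1
          omega
        have hdim₀ : Module.finrank ℂ ((E i)⟦m₀⟧ ⟶ Z) <
            Module.finrank ℂ ((E i)⟦m₀⟧ ⟶ X) := by
          haveI := hFin ((E i)⟦m₀⟧) X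
          haveI := hFin ((E i)⟦m₀⟧) Z
          set α := Linear.rightComp ℂ ((E i)⟦m₀⟧) g with hα
          have hαs : Function.Surjective α := by
            intro w
            obtain ⟨v, hv⟩ := hsurj m₀ w
            exact ⟨v, hv.symm⟩
          have h1 := LinearMap.finrank_range_add_finrank_ker α
          rw [LinearMap.range_eq_top.mpr hαs, finrank_top] at h1
          have hfker : f ∈ LinearMap.ker α := by
            rw [LinearMap.mem_ker]
            exact comp_distTriang_mor_zero₁₂ _ hT
          have hker : 0 < Module.finrank ℂ (LinearMap.ker α) :=
            Module.finrank_pos_iff.mpr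
              ⟨⟨f, hfker⟩, 0, fun hEq => hf (by simpa using congrArg Subtype.val hEq)⟩
          omega
        have hsum' : (∑ k ∈ s, Module.finrank ℂ ((E i)⟦k⟧ ⟶ Z)) ≤ n := by
          have hlt : (∑ k ∈ s, Module.finrank ℂ ((E i)⟦k⟧ ⟶ Z)) <
              ∑ k ∈ s, Module.finrank ℂ ((E i)⟦k⟧ ⟶ X) :=
            Finset.sum_lt_sum (fun k _ => hdim k) ⟨m₀, hm₀s, hdim₀⟩
          omega
        have hvan' : ∀ k, k ∉ s → ∀ w : (E i)⟦k⟧ ⟶ Z, w = 0 := by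
          intro k hk w
          obtain ⟨v, hv⟩ := hsurj k w
          rw [hv, hvan k hk v, zero_comp]
        have hperp' : ∀ j : Fin (r + 1), i < j → ∀ (m : ℤ) (w : (E j)⟦m⟧ ⟶ Z), w = 0 := by
          intro j hj m w
          have hw3 : w ≫ h' = 0 := shiftedHomEE E hHom hExt m m₀ 1 (Or.inl hj) (w ≫ h')
          obtain ⟨v, hv⟩ := Triangle.coyoneda_exact₃ _ hT w hw3
          rw [hv, hperp j hj m v]
          exact zero_comp
        have hZ : genBy (Set.range E) Z := ih i Z ⟨s, hvan', hsum'⟩ hperp' next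
        have hE1 : genBy (Set.range E) (((E i)⟦m₀⟧ : C)) :=
          genBy.shift m₀ (genBy.of ⟨i, rfl⟩)
        exact genBy_ext₂ hT hE1 hZ
  -- Outer induction over the members of the collection.
  have main : ∀ (t : ℕ) (X : C),
      (∀ j : Fin (r + 1), t ≤ (j : ℕ) → ∀ (m : ℤ) (w : (E j)⟦m⟧ ⟶ X), w = 0) →
      genBy (Set.range E) X := by
    intro t
    induction t with
    | zero =>
      intro X hX
      have hz := hPerp X (fun j m w => hX j (Nat.zero_le _) m w)
      exact genBy.summand (0 : X ⟶ E 0) 0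
        (by rw [comp_zero]; exact hz.eq_of_src 0 (𝟙 X)) (genBy.of ⟨0, rfl⟩)
    | succ t ih =>
      intro X hX
      by_cases ht : t ≤ r
      · set i : Fin (r + 1) := ⟨t, by omega⟩ with hi
        obtain ⟨N, hN⟩ := hBdd (E i) X
        have hvan : ∀ k : ℤ, k ∉ Finset.Ioo (-(N : ℤ)) (N : ℤ) →
            ∀ w : (E i)⟦k⟧ ⟶ X, w = 0 := by
          intro k hk w
          rw [← unshift_eq_zero_iff k]
          refine hN (-k) ?_ _
          simp only [Finset.mem_Ioo, not_and_or, not_lt] at hk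
          rw [abs_neg]
          rcases hk with h | h
          · rw [abs_of_nonpos (by omega)]; omega
          · rw [abs_of_nonneg (by omega)]; omega
        refine peel (∑ k ∈ Finset.Ioo (-(N : ℤ)) (N : ℤ),
            Module.finrank ℂ ((E i)⟦k⟧ ⟶ X)) i X ⟨_, hvan, le_refl _⟩ ?_ ?_
        · intro j hj m w
          exact hX j (Nat.succ_le_of_lt (Fin.lt_def.mp hj)) m w
        · intro Y hY
          exact ih Y (fun j hj m w => hY j (Fin.le_def.mpr hj) m w)
      · exact ih X (fun j hj m w => absurd (lt_of_le_of_lt hj j.isLt) (by omega))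
  intro X
  exact main (r + 1) X (fun j hj _ _ => absurd (lt_of_le_of_lt hj j.isLt) (lt_irrefl _))

end Stmt0
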